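/- Let ρ ∈ (0,1) and let Tⁿ : [0,1] → ℂ, n ≥ 0, satisfy the recursion Tⁿ(r) = ρ⁻¹ Tⁿ⁻¹(ρr) + eⁿ⁻¹(r) with Tⁿ(0) = 0 = eⁿ(0), where T⁰ is C¹ and each eⁿ is C¹ with sup_{r∈[0,1]}(|eⁿ(r)| + |(eⁿ)′(r)|) ≤ Cγₙ² and Σγₙ² < ∞. Then Tⁿ(r) → λr uniformly on [0,1] as n → ∞, where λ = (T⁰)′(0) + Σ_{k=0}^∞ (eᵏ)′(0). -/

import Mathlib

open Filter

set_option maxHeartbeats 800000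

lemma littleO_at_zero {f : ℝ → ℂ} {L : ℂ} (h0 : f 0 = 0) (h : HasDerivAt f L 0)
    {ε : ℝ} (hε : 0 < ε) :
    ∃ δ > 0, ∀ s : ℝ, |s| ≤ δ → ‖f s - L * s‖ ≤ ε * |s| := by
  have h1 : (fun s => f s - f 0 - (s - 0) • L) =o[nhds 0] fun s => s - 0 :=
    hasDerivAt_iff_isLittleO.mp h
  have h2 := (Asymptotics.isLittleO_iff.mp h1) hε
  simp only [h0, sub_zero] at h2
  rcases Metric.eventually_nhds_iff.mp h2 with ⟨δ, hδ, hδ'⟩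
  refine ⟨δ/2, by linarith, fun s hs => ?_⟩
  by_cases h3 : s = 0
  · simp [h3, h0]
  · have : dist s 0 < δ := by
      rw [Real.dist_eq, sub_zero]; linarith [abs_nonneg s]
    have := hδ' this
    simpa [smul_eq_mul, mul_comm, Real.norm_eq_abs] using this

lemma mvt_bound {f : ℝ → ℂ} {f' : ℝ → ℂ} {M : ℝ}
    (h0 : f 0 = 0)
    (hd : ∀ s ∈ Set.Icc (0:ℝ) 1, HasDerivAt f (f' s) s)
    (hM : ∀ s ∈ Set.Icc (0:ℝ) 1, ‖f' s‖ ≤ M) :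
    ∀ t ∈ Set.Icc (0:ℝ) 1, ‖f t‖ ≤ M * t := by
  intro t ht
  have := (convex_Icc (0:ℝ) 1).norm_image_sub_le_of_norm_hasDerivWithin_le
    (fun s hs => (hd s hs).hasDerivWithinAt) hM (Set.left_mem_Icc.mpr zero_le_one) ht
  simpa [h0, Real.norm_eq_abs, abs_of_nonneg ht.1] using this

lemma iter_formula
    (ρ : ℝ) (hρ₀ : 0 < ρ) (hρ₁ : ρ < 1)
    (T : ℕ → ℝ → ℂ) (e : ℕ → ℝ → ℂ)
    (hrec : ∀ n, ∀ r ∈ Set.Icc (0 : ℝ) 1,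
        T (n + 1) r = (ρ⁻¹ : ℂ) * T n (ρ * r) + e n r) :
    ∀ n, ∀ r ∈ Set.Icc (0 : ℝ) 1,
      T n r = ((ρ:ℂ)^n)⁻¹ * T 0 (ρ^n * r)
        + ∑ k ∈ Finset.range n, ((ρ:ℂ)^(n-1-k))⁻¹ * e k (ρ^(n-1-k) * r) := by
  have hρc : (ρ:ℂ) ≠ 0 := by exact_mod_cast hρ₀.ne'
  intro n
  induction n with
  | zero => intro r hr; simp
  | succ n ih =>
    intro r hr
    have hρr : ρ * r ∈ Set.Icc (0:ℝ) 1 := by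
      constructor
      · exact mul_nonneg hρ₀.le hr.1
      · nlinarith [hr.1, hr.2]
    rw [hrec n r hr, ih (ρ * r) hρr, Finset.sum_range_succ]
    have key : ∀ k ∈ Finset.range n,
        ((ρ:ℂ))⁻¹ * (((ρ:ℂ)^(n-1-k))⁻¹ * e k (ρ^(n-1-k) * (ρ * r)))
        = ((ρ:ℂ)^(n+1-1-k))⁻¹ * e k (ρ^(n+1-1-k) * r) := by
      intro k hk
      have hk' : k < n := Finset.mem_range.mp hk
      have h1 : n + 1 - 1 - k = (n - 1 - k) + 1 := by omega
      rw [h1, pow_succ, pow_succ]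
      have : ρ ^ (n - 1 - k) * ρ * r = ρ ^ (n - 1 - k) * (ρ * r) := by ring
      rw [this, mul_inv]
      ring
    rw [mul_add, Finset.mul_sum, Finset.sum_congr rfl key]
    have h2 : (ρ:ℂ)⁻¹ * (((ρ:ℂ)^n)⁻¹ * T 0 (ρ^n * (ρ * r)))
        = ((ρ:ℂ)^(n+1))⁻¹ * T 0 (ρ^(n+1) * r) := by
      have : ρ ^ n * (ρ * r) = ρ ^ (n+1) * r := by ring
      rw [this]
      rw [show ((ρ:ℂ)^(n+1))⁻¹ = ((ρ:ℂ)^n)⁻¹ * ((ρ:ℂ))⁻¹ by rw [pow_succ, mul_inv]]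
      ring
    rw [h2]
    simp
    ring

/-- **Convergence of the diagonal part to a multiple of `H_f` (appendix,
Step 2).**  Let `ρ ∈ (0,1)` and `Tⁿ : [0,1] → ℂ` satisfy
`Tⁿ⁺¹(r) = ρ⁻¹Tⁿ(ρr) + eⁿ(r)` with `Tⁿ(0) = 0 = eⁿ(0)`, `T⁰` is `C¹` (with
derivative `T0'`), each `eⁿ` is `C¹` (derivative `e' n`) with
`sup_{[0,1]}(|eⁿ| + |(eⁿ)′|) ≤ Cγₙ²` and `Σγₙ² < ∞`.  Then
`Tⁿ(r) → λ·r` uniformly on `[0,1]`, where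
`λ = (T⁰)′(0) + Σ_{k} (eᵏ)′(0)`. -/
theorem diagonal_part_converges
    (ρ : ℝ) (hρ₀ : 0 < ρ) (hρ₁ : ρ < 1)
    (C : ℝ) (hC : 0 ≤ C)
    (γ : ℕ → ℝ) (hγ : ∀ n, 0 ≤ γ n) (hγsum : Summable (fun n => γ n ^ 2))
    (T : ℕ → ℝ → ℂ) (e : ℕ → ℝ → ℂ)
    (T0' : ℝ → ℂ) (e' : ℕ → ℝ → ℂ)
    (hrec : ∀ n, ∀ r ∈ Set.Icc (0 : ℝ) 1,
        T (n + 1) r = (ρ⁻¹ : ℂ) * T n (ρ * r) + e n r)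
    (hT0 : ∀ n, T n 0 = 0) (he0 : ∀ n, e n 0 = 0)
    (hT0' : ∀ r ∈ Set.Icc (0 : ℝ) 1, HasDerivAt (T 0) (T0' r) r)
    (he' : ∀ n, ∀ r ∈ Set.Icc (0 : ℝ) 1, HasDerivAt (e n) (e' n r) r)
    (hbound : ∀ n, ∀ r ∈ Set.Icc (0 : ℝ) 1, ‖e n r‖ + ‖e' n r‖ ≤ C * γ n ^ 2) :
    TendstoUniformlyOn (fun n r => T n r)
      (fun r => (T0' 0 + ∑' k : ℕ, e' k 0) * (r : ℂ)) atTop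
      (Set.Icc (0 : ℝ) 1) := by
  have h0mem : (0:ℝ) ∈ Set.Icc (0:ℝ) 1 := Set.left_mem_Icc.mpr zero_le_one
  have hρm : ∀ m : ℕ, 0 < ρ ^ m := fun m => pow_pos hρ₀ m
  have hρle1 : ∀ m : ℕ, ρ ^ m ≤ 1 := fun m => pow_le_one₀ hρ₀.le hρ₁.le
  have hnormpow : ∀ m : ℕ, ‖((ρ:ℂ)^m)⁻¹‖ = (ρ^m)⁻¹ := by
    intro m
    rw [norm_inv, norm_pow, Complex.norm_real, Real.norm_eq_abs, abs_of_pos hρ₀]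
  have hg0 : ∀ k, (0:ℝ) ≤ C * γ k ^ 2 := fun k => mul_nonneg hC (sq_nonneg _)
  have hge : Summable (fun k => C * γ k ^ 2) := hγsum.mul_left C
  have hnorm' : ∀ k, ‖e' k 0‖ ≤ C * γ k ^ 2 := fun k =>
    le_trans (le_add_of_nonneg_left (norm_nonneg _)) (hbound k 0 h0mem)
  have hnormE : ∀ k s, s ∈ Set.Icc (0:ℝ) 1 → ‖e' k s‖ ≤ C * γ k ^ 2 := fun k s hs =>
    le_trans (le_add_of_nonneg_left (norm_nonneg _)) (hbound k s hs)
  have hsum : Summable (fun k => e' k 0) :=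
    Summable.of_norm_bounded hge hnorm'
  set S := ∑' k : ℕ, e' k 0 with hS
  set L := T0' 0 with hL
  -- tail bound
  have htail : ∀ n, ‖S - ∑ k ∈ Finset.range n, e' k 0‖ ≤ ∑' k, C * γ (k+n) ^ 2 := by
    intro n
    have h1 := hsum.sum_add_tsum_nat_add n
    have h2 : S - ∑ k ∈ Finset.range n, e' k 0 = ∑' k, e' (k+n) 0 := by
      rw [hS, ← h1]; ring
    rw [h2]
    have hs1 : Summable (fun k => ‖e' (k+n) 0‖) :=
      ((summable_nat_add_iff n).mpr (hsum.norm))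
    calc ‖∑' k, e' (k+n) 0‖ ≤ ∑' k, ‖e' (k+n) 0‖ := norm_tsum_le_tsum_norm hs1
      _ ≤ ∑' k, C * γ (k+n) ^ 2 :=
        Summable.tsum_le_tsum (fun k => hnorm' (k+n)) hs1 ((summable_nat_add_iff n).mpr hge)
  have ht0 : Tendsto (fun n => ∑' k, C * γ (k+n) ^ 2) atTop (nhds 0) :=
    tendsto_sum_nat_add (fun j => C * γ j ^ 2)
  have hρ0 : Tendsto (fun m : ℕ => ρ ^ m) atTop (nhds 0) :=
    tendsto_pow_atTop_nhds_zero_of_lt_one hρ₀.le hρ₁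
  -- uniform bound for each summand
  have claimI : ∀ k m, ∀ r ∈ Set.Icc (0:ℝ) 1,
      ‖((ρ:ℂ)^m)⁻¹ * e k (ρ^m * r) - e' k 0 * r‖ ≤ 2 * (C * γ k ^ 2) := by
    intro k m r hr
    have ht : ρ^m * r ∈ Set.Icc (0:ℝ) 1 := by
      constructor
      · exact mul_nonneg (hρm m).le hr.1
      · nlinarith [hr.1, hr.2, hρm m, hρle1 m]
    have h1 : ‖e k (ρ^m * r)‖ ≤ C * γ k ^ 2 * (ρ^m * r) :=
      mvt_bound (he0 k) (he' k) (hnormE k) _ ht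
    have h2 : ‖((ρ:ℂ)^m)⁻¹ * e k (ρ^m * r)‖ ≤ C * γ k ^ 2 := by
      rw [norm_mul, hnormpow m]
      calc (ρ^m)⁻¹ * ‖e k (ρ^m * r)‖ ≤ (ρ^m)⁻¹ * (C * γ k ^ 2 * (ρ^m * r)) := by
            exact mul_le_mul_of_nonneg_left h1 (inv_nonneg.mpr (hρm m).le)
        _ = C * γ k ^ 2 * r := by field_simp
        _ ≤ C * γ k ^ 2 * 1 := by
            exact mul_le_mul_of_nonneg_left hr.2 (hg0 k)
        _ = C * γ k ^ 2 := mul_one _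
    have h3 : ‖e' k 0 * r‖ ≤ C * γ k ^ 2 := by
      rw [norm_mul, Complex.norm_real, Real.norm_eq_abs, abs_of_nonneg hr.1]
      calc ‖e' k 0‖ * r ≤ (C * γ k ^ 2) * 1 :=
            mul_le_mul (hnorm' k) hr.2 hr.1 (hg0 k)
        _ = C * γ k ^ 2 := mul_one _
    calc ‖((ρ:ℂ)^m)⁻¹ * e k (ρ^m * r) - e' k 0 * r‖
        ≤ ‖((ρ:ℂ)^m)⁻¹ * e k (ρ^m * r)‖ + ‖e' k 0 * r‖ := norm_sub_le _ _
      _ ≤ C * γ k ^ 2 + C * γ k ^ 2 := add_le_add h2 h3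
      _ = 2 * (C * γ k ^ 2) := by ring
  -- convergence of each rescaled term, uniform in r
  have claimScale : ∀ (f : ℝ → ℂ) (Lf : ℂ), f 0 = 0 → HasDerivAt f Lf 0 →
      ∀ ε' > 0, ∃ M : ℕ, ∀ m ≥ M, ∀ r ∈ Set.Icc (0:ℝ) 1,
        ‖((ρ:ℂ)^m)⁻¹ * f (ρ^m * r) - Lf * r‖ ≤ ε' := by
    intro f Lf hf0 hfd ε' hε'
    obtain ⟨δ, hδ, hδ'⟩ := littleO_at_zero hf0 hfd hε'
    obtain ⟨M, hM⟩ := eventually_atTop.mp (hρ0.eventually_le_const hδ)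
    refine ⟨M, fun m hm r hr => ?_⟩
    have hρmδ : ρ ^ m ≤ δ := hM m hm
    have hsmem : |ρ^m * r| ≤ δ := by
      rw [abs_of_nonneg (mul_nonneg (hρm m).le hr.1)]
      nlinarith [hr.1, hr.2, hρm m]
    have h1 := hδ' (ρ^m * r) hsmem
    have key : ((ρ:ℂ)^m)⁻¹ * f (ρ^m * r) - Lf * r
        = ((ρ:ℂ)^m)⁻¹ * (f (ρ^m * r) - Lf * ((ρ^m * r : ℝ) : ℂ)) := by
      have hne : ((ρ:ℂ)^m) ≠ 0 := by
        exact_mod_cast (hρm m).ne'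
      field_simp
      push_cast
      ring
    rw [key, norm_mul, hnormpow m]
    calc (ρ^m)⁻¹ * ‖f (ρ^m * r) - Lf * ((ρ^m * r : ℝ) : ℂ)‖
        ≤ (ρ^m)⁻¹ * (ε' * |ρ^m * r|) := by
          exact mul_le_mul_of_nonneg_left h1 (inv_nonneg.mpr (hρm m).le)
      _ = ε' * r := by
          rw [abs_of_nonneg (mul_nonneg (hρm m).le hr.1)]
          field_simp
      _ ≤ ε' * 1 := mul_le_mul_of_nonneg_left hr.2 hε'.le
      _ = ε' := mul_one _
  have hform := iter_formula ρ hρ₀ hρ₁ T e hrec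
  rw [Metric.tendstoUniformlyOn_iff]
  intro ε hε
  -- choose K for the tails
  obtain ⟨K, hK⟩ := eventually_atTop.mp (ht0.eventually_lt_const (by linarith : (0:ℝ) < ε/16))
  -- event for the head terms
  have hhead : ∀ᶠ n in atTop, ∀ k ∈ Finset.range K, ∀ r ∈ Set.Icc (0:ℝ) 1,
      ‖((ρ:ℂ)^(n-1-k))⁻¹ * e k (ρ^(n-1-k) * r) - e' k 0 * r‖ ≤ ε/(4*(K+1)) := by
    rw [Filter.eventually_all_finset]
    intro k hk
    have hεK : (0:ℝ) < ε/(4*(K+1)) := by positivity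
    obtain ⟨M, hM⟩ := claimScale (e k) (e' k 0) (he0 k) (he' k 0 h0mem) _ hεK
    filter_upwards [eventually_ge_atTop (M + k + 1)] with n hn
    exact hM (n-1-k) (by omega)
  -- event for the T0 term
  obtain ⟨M₀, hM₀⟩ := claimScale (T 0) L (hT0 0) (hT0' 0 h0mem) (ε/4) (by linarith)
  filter_upwards [hhead, eventually_ge_atTop M₀, eventually_ge_atTop K] with n hheadn hnM₀ hnK
  intro r hr
  rw [dist_eq_norm', hform n r hr]
  have decomp : ((ρ:ℂ)^n)⁻¹ * T 0 (ρ^n * r)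
        + (∑ k ∈ Finset.range n, ((ρ:ℂ)^(n-1-k))⁻¹ * e k (ρ^(n-1-k) * r))
        - (L + S) * r
      = (((ρ:ℂ)^n)⁻¹ * T 0 (ρ^n * r) - L * r)
        + (∑ k ∈ Finset.range n,
            (((ρ:ℂ)^(n-1-k))⁻¹ * e k (ρ^(n-1-k) * r) - e' k 0 * r))
        + ((∑ k ∈ Finset.range n, e' k 0) - S) * r := by
    rw [Finset.sum_sub_distrib, ← Finset.sum_mul]
    ring
  rw [decomp]
  have b1 : ‖((ρ:ℂ)^n)⁻¹ * T 0 (ρ^n * r) - L * r‖ ≤ ε/4 := hM₀ n hnM₀ r hr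
  have b3 : ‖((∑ k ∈ Finset.range n, e' k 0) - S) * r‖ ≤ ∑' k, C * γ (k+n) ^ 2 := by
    rw [norm_mul, Complex.norm_real, Real.norm_eq_abs, abs_of_nonneg hr.1]
    calc ‖(∑ k ∈ Finset.range n, e' k 0) - S‖ * r
        ≤ ‖(∑ k ∈ Finset.range n, e' k 0) - S‖ * 1 :=
          mul_le_mul_of_nonneg_left hr.2 (norm_nonneg _)
      _ = ‖S - ∑ k ∈ Finset.range n, e' k 0‖ := by rw [mul_one, norm_sub_rev]
      _ ≤ ∑' k, C * γ (k+n) ^ 2 := htail n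
  have b3' : ‖((∑ k ∈ Finset.range n, e' k 0) - S) * r‖ ≤ ε/16 :=
    le_trans b3 (hK n hnK).le
  -- the middle sum
  have b2 : ‖∑ k ∈ Finset.range n,
      (((ρ:ℂ)^(n-1-k))⁻¹ * e k (ρ^(n-1-k) * r) - e' k 0 * r)‖ ≤ ε/4 + ε/8 := by
    set a : ℕ → ℂ := fun k => ((ρ:ℂ)^(n-1-k))⁻¹ * e k (ρ^(n-1-k) * r) - e' k 0 * r with ha
    have hsplit : ∑ k ∈ Finset.range n, ‖a k‖
        = ∑ k ∈ Finset.range K, ‖a k‖ + ∑ k ∈ Finset.Ico K n, ‖a k‖ := by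
      rw [Finset.range_eq_Ico, Finset.range_eq_Ico]
      exact (Finset.sum_Ico_consecutive _ (Nat.zero_le K) hnK).symm
    have hhd : ∑ k ∈ Finset.range K, ‖a k‖ ≤ (K : ℝ) * (ε/(4*(K+1))) := by
      calc ∑ k ∈ Finset.range K, ‖a k‖ ≤ ∑ k ∈ Finset.range K, ε/(4*(K+1)) :=
            Finset.sum_le_sum (fun k hk => hheadn k hk r hr)
        _ = (K : ℝ) * (ε/(4*(K+1))) := by
            rw [Finset.sum_const, Finset.card_range, nsmul_eq_mul]
    have hhd' : (K : ℝ) * (ε/(4*(K+1))) ≤ ε/4 := by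
      have h1 : (K : ℝ) / (K+1) ≤ 1 := by
        rw [div_le_one (by positivity)]; linarith
      have h2 : (K:ℝ) * (ε/(4*((K:ℝ)+1))) = ((K:ℝ)/((K:ℝ)+1)) * (ε/4) := by
        rw [div_eq_mul_inv, div_eq_mul_inv, div_eq_mul_inv, mul_inv]
        ring
      rw [h2]
      calc ((K:ℝ)/((K:ℝ)+1)) * (ε/4) ≤ 1 * (ε/4) :=
            mul_le_mul_of_nonneg_right h1 (by linarith)
        _ = ε/4 := one_mul _
    have htl : ∑ k ∈ Finset.Ico K n, ‖a k‖ ≤ ε/8 := by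
      calc ∑ k ∈ Finset.Ico K n, ‖a k‖
          ≤ ∑ k ∈ Finset.Ico K n, 2 * (C * γ k ^ 2) :=
            Finset.sum_le_sum (fun k _ => claimI k (n-1-k) r hr)
        _ = 2 * ∑ k ∈ Finset.Ico K n, C * γ k ^ 2 := by rw [Finset.mul_sum]
        _ = 2 * ∑ j ∈ Finset.range (n - K), C * γ (K + j) ^ 2 := by
            rw [Finset.sum_Ico_eq_sum_range]
        _ ≤ 2 * ∑' j, C * γ (j + K) ^ 2 := by
            have hsK : Summable (fun j => C * γ (j + K) ^ 2) :=
              (summable_nat_add_iff K).mpr hge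
            have := Summable.sum_le_tsum (Finset.range (n - K))
              (fun j _ => hg0 (j + K)) hsK
            have heq : ∑ j ∈ Finset.range (n - K), C * γ (K + j) ^ 2
                = ∑ j ∈ Finset.range (n - K), C * γ (j + K) ^ 2 := by
              apply Finset.sum_congr rfl
              intro j _; rw [Nat.add_comm]
            rw [heq]
            linarith
        _ ≤ 2 * (ε/16) := by linarith [(hK K (le_refl K)).le]
        _ = ε/8 := by ring
    calc ‖∑ k ∈ Finset.range n, a k‖ ≤ ∑ k ∈ Finset.range n, ‖a k‖ :=
          norm_sum_le _ _
      _ = ∑ k ∈ Finset.range K, ‖a k‖ + ∑ k ∈ Finset.Ico K n, ‖a k‖ := hsplit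
      _ ≤ ε/4 + ε/8 := add_le_add (le_trans hhd hhd') htl
  calc ‖(((ρ:ℂ)^n)⁻¹ * T 0 (ρ^n * r) - L * r)
        + (∑ k ∈ Finset.range n,
            (((ρ:ℂ)^(n-1-k))⁻¹ * e k (ρ^(n-1-k) * r) - e' k 0 * r))
        + ((∑ k ∈ Finset.range n, e' k 0) - S) * r‖
      ≤ ‖(((ρ:ℂ)^n)⁻¹ * T 0 (ρ^n * r) - L * r)
        + (∑ k ∈ Finset.range n,
            (((ρ:ℂ)^(n-1-k))⁻¹ * e k (ρ^(n-1-k) * r) - e' k 0 * r))‖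
        + ‖((∑ k ∈ Finset.range n, e' k 0) - S) * r‖ := norm_add_le _ _
    _ ≤ (‖((ρ:ℂ)^n)⁻¹ * T 0 (ρ^n * r) - L * r‖
        + ‖∑ k ∈ Finset.range n,
            (((ρ:ℂ)^(n-1-k))⁻¹ * e k (ρ^(n-1-k) * r) - e' k 0 * r)‖)
        + ‖((∑ k ∈ Finset.range n, e' k 0) - S) * r‖ :=
          add_le_add_left (norm_add_le _ _) _
    _ ≤ (ε/4 + (ε/4 + ε/8)) + ε/16 := add_le_add (add_le_add b1 b2) b3'
    _ < ε := by linarith
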